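/- Let G = ⟨(ACGT),(AG)⟩ ≤ Sym({A,C,G,T}) be the Kimura 2-parameter group of order 8, acting diagonally on B^n with B = {A,C,G,T}. If X ∈ B^n does not lie in B_{AG|CT} = {A,G}^n ∪ {C,T}^n, then the G-orbit of X has exactly 8 elements. Consequently the number of G-orbits meeting B^n \ B_{AG|CT} is (4^n − 2^{n+1})/8 = 2^{2n-3} − 2^{n-2} for n ≥ 2. -/
import Mathlib

open Equiv MulAction

/-- The dihedral group of order 8 of the Kimura 2-parameter model,
generated by (ACGT) and (AG); A=0, C=1, G=2, T=3. -/
def k80Group : Subgroup (Equiv.Perm (Fin 4)) :=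
  Subgroup.closure {finRotate 4, Equiv.swap 0 2}

/-- The set of `n`-words with all letters in a given subset of {A,C,G,T}. -/
def wordsIn (n : ℕ) (S : Set (Fin 4)) : Set (Fin n → Fin 4) := {X | ∀ i, X i ∈ S}

private abbrev kc : Perm (Fin 4) := finRotate 4
private abbrev ks : Perm (Fin 4) := Equiv.swap 0 2

private def KK : Subgroup (Perm (Fin 4)) where
  carrier := {g | g = 1 ∨ g = kc ∨ g = kc^2 ∨ g = kc^3 ∨ g = ks ∨ g = ks*kc ∨ g = ks*kc^2 ∨ g = ks*kc^3}
  one_mem' := by left; rfl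
  mul_mem' := by
    intro a b ha hb
    simp only [Set.mem_setOf_eq] at *
    rcases ha with rfl|rfl|rfl|rfl|rfl|rfl|rfl|rfl <;>
      rcases hb with rfl|rfl|rfl|rfl|rfl|rfl|rfl|rfl <;> decide
  inv_mem' := by
    intro a ha
    simp only [Set.mem_setOf_eq] at *
    rcases ha with rfl|rfl|rfl|rfl|rfl|rfl|rfl|rfl <;> decide

private lemma mem_KK_iff (g : Perm (Fin 4)) : g ∈ KK ↔
    (g = 1 ∨ g = kc ∨ g = kc^2 ∨ g = kc^3 ∨ g = ks ∨ g = ks*kc ∨ g = ks*kc^2 ∨ g = ks*kc^3) :=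
  Iff.rfl

private lemma k80_eq : k80Group = KK := by
  apply le_antisymm
  · rw [k80Group, Subgroup.closure_le]
    rintro g (rfl | rfl)
    · right; left; rfl
    · right; right; right; right; left; rfl
  · intro g hg
    have hc : kc ∈ k80Group := Subgroup.subset_closure (by left; rfl)
    have hs : ks ∈ k80Group := Subgroup.subset_closure (by right; rfl)
    rcases (mem_KK_iff g).1 hg with rfl|rfl|rfl|rfl|rfl|rfl|rfl|rfl
    · exact one_mem _
    · exact hc
    · exact pow_mem hc 2
    · exact pow_mem hc 3
    · exact hs
    · exact mul_mem hs hc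
    · exact mul_mem hs (pow_mem hc 2)
    · exact mul_mem hs (pow_mem hc 3)

private instance : DecidablePred (· ∈ KK) := fun g => decidable_of_iff _ (mem_KK_iff g).symm

private lemma card_k80 : Nat.card k80Group = 8 := by
  rw [k80_eq, Nat.card_eq_fintype_card]; decide

/-- only the identity fixes a point of {1,3} and a point of {0,2} -/
private lemma KK_fix {g : Perm (Fin 4)} (hg : g ∈ KK) {a b : Fin 4}
    (ha : a = 1 ∨ a = 3) (hb : b = 0 ∨ b = 2) (h1 : g a = a) (h2 : g b = b) : g = 1 := by
  rcases (mem_KK_iff g).1 hg with rfl|rfl|rfl|rfl|rfl|rfl|rfl|rfl <;>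
    rcases ha with rfl|rfl <;> rcases hb with rfl|rfl <;> revert h1 h2 <;> decide

/-- every element of KK preserves or swaps the classes {0,2},{1,3} -/
private lemma KK_classes {g : Perm (Fin 4)} (hg : g ∈ KK) :
    (∀ a : Fin 4, ((a = 1 ∨ a = 3) → (g a = 1 ∨ g a = 3)) ∧
      ((a = 0 ∨ a = 2) → (g a = 0 ∨ g a = 2))) ∨
    (∀ a : Fin 4, ((a = 1 ∨ a = 3) → (g a = 0 ∨ g a = 2)) ∧
      ((a = 0 ∨ a = 2) → (g a = 1 ∨ g a = 3))) := by
  rcases (mem_KK_iff g).1 hg with rfl|rfl|rfl|rfl|rfl|rfl|rfl|rfl <;>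
    first | (left; decide) | (right; decide)

private lemma not02 : ∀ a : Fin 4, (a = 1 ∨ a = 3) → ¬(a = 0 ∨ a = 2) := by decide
private lemma not13 : ∀ a : Fin 4, (a = 0 ∨ a = 2) → ¬(a = 1 ∨ a = 3) := by decide
private lemma of_not02 : ∀ a : Fin 4, a ≠ 0 ∧ a ≠ 2 → (a = 1 ∨ a = 3) := by decide
private lemma of_not13 : ∀ a : Fin 4, a ≠ 1 ∧ a ≠ 3 → (a = 0 ∨ a = 2) := by decide
private lemma not02' : ∀ a : Fin 4, (a = 1 ∨ a = 3) → a ≠ 0 ∧ a ≠ 2 := by decide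
private lemma not13' : ∀ a : Fin 4, (a = 0 ∨ a = 2) → a ≠ 1 ∧ a ≠ 3 := by decide

private lemma mem_wordsIn02 {n : ℕ} (X : Fin n → Fin 4) :
    X ∈ wordsIn n {0, 2} ↔ ∀ i, X i = 0 ∨ X i = 2 := Iff.rfl

private lemma mem_wordsIn13 {n : ℕ} (X : Fin n → Fin 4) :
    X ∈ wordsIn n {1, 3} ↔ ∀ i, X i = 1 ∨ X i = 3 := Iff.rfl

private lemma notU_iff {n : ℕ} (X : Fin n → Fin 4) :
    X ∉ wordsIn n {0, 2} ∪ wordsIn n {1, 3} ↔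
      (∃ i, X i = 1 ∨ X i = 3) ∧ (∃ j, X j = 0 ∨ X j = 2) := by
  rw [Set.mem_union, not_or, mem_wordsIn02, mem_wordsIn13]
  push_neg
  constructor
  · rintro ⟨⟨i, hi⟩, ⟨j, hj⟩⟩
    exact ⟨⟨i, of_not02 _ hi⟩, ⟨j, of_not13 _ hj⟩⟩
  · rintro ⟨⟨i, hi⟩, ⟨j, hj⟩⟩
    exact ⟨⟨i, not02' _ hi⟩, ⟨j, not13' _ hj⟩⟩

private lemma smul_apply' {n : ℕ} (g : k80Group) (X : Fin n → Fin 4) (i : Fin n) :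
    (g • X) i = (g : Perm (Fin 4)) (X i) := rfl

/-- the complement of B_{AG|CT} is stable -/
private lemma smul_notU {n : ℕ} {X : Fin n → Fin 4}
    (hX : X ∉ wordsIn n {0, 2} ∪ wordsIn n {1, 3}) (g : k80Group) :
    g • X ∉ wordsIn n {0, 2} ∪ wordsIn n {1, 3} := by
  obtain ⟨⟨i, hi⟩, ⟨j, hj⟩⟩ := (notU_iff X).1 hX
  have hg : (g : Perm (Fin 4)) ∈ KK := k80_eq ▸ g.2
  rw [notU_iff]
  rcases KK_classes hg with h | h
  · exact ⟨⟨i, by rw [smul_apply']; exact (h _).1 hi⟩,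
      ⟨j, by rw [smul_apply']; exact (h _).2 hj⟩⟩
  · exact ⟨⟨j, by rw [smul_apply']; exact (h _).2 hj⟩,
      ⟨i, by rw [smul_apply']; exact (h _).1 hi⟩⟩

private lemma orbit_card {n : ℕ} {X : Fin n → Fin 4}
    (hX : X ∉ wordsIn n {0, 2} ∪ wordsIn n {1, 3}) :
    Nat.card (MulAction.orbit k80Group X) = 8 := by
  obtain ⟨⟨i, hi⟩, ⟨j, hj⟩⟩ := (notU_iff X).1 hX
  have hstab : stabilizer k80Group X = ⊥ := by
    rw [Subgroup.eq_bot_iff_forall]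
    intro g hgmem
    have hfix : g • X = X := hgmem
    have hg : (g : Perm (Fin 4)) ∈ KK := k80_eq ▸ g.2
    have h1 : (g : Perm (Fin 4)) (X i) = X i := by rw [← smul_apply', hfix]
    have h2 : (g : Perm (Fin 4)) (X j) = X j := by rw [← smul_apply', hfix]
    exact Subtype.ext (KK_fix hg hi hj h1 h2)
  have := MulAction.index_stabilizer k80Group X
  rw [hstab, Subgroup.index_bot, card_k80] at this
  rw [Nat.card_coe_set_eq, ← this]

private lemma card_wordsIn {n : ℕ} (S : Set (Fin 4)) (hS : Nat.card S = 2) :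
    Nat.card (wordsIn n S) = 2 ^ n := by
  have h1 : wordsIn n S = Set.pi Set.univ (fun _ => S) := by
    ext X; simp [wordsIn, Set.mem_pi]
  rw [h1, Nat.card_congr (Equiv.Set.univPi _), Nat.card_pi]
  simp [hS]

/-- Words outside `B_{AG|CT} = {A,G}^n ∪ {C,T}^n` have a free K80-orbit of
cardinality 8, and for `n ≥ 2` the number of K80-orbits meeting the complement
of `B_{AG|CT}` is `(4^n − 2^(n+1))/8 = 2^(2n-3) − 2^(n-2)`. -/
theorem k80_orbits_outside_BAGCT (n : ℕ) (hn : 2 ≤ n) :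
    (∀ X : Fin n → Fin 4, X ∉ wordsIn n {0, 2} ∪ wordsIn n {1, 3} →
        Nat.card (MulAction.orbit k80Group X) = 8) ∧
      Nat.card {o : Quotient (MulAction.orbitRel k80Group (Fin n → Fin 4)) //
          ∃ X : Fin n → Fin 4, X ∉ wordsIn n {0, 2} ∪ wordsIn n {1, 3} ∧
            Quotient.mk (MulAction.orbitRel k80Group (Fin n → Fin 4)) X = o}
        = (4 ^ n - 2 ^ (n + 1)) / 8 ∧
      (4 ^ n - 2 ^ (n + 1)) / 8 = 2 ^ (2 * n - 3) - 2 ^ (n - 2) := by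
  classical
  set U := wordsIn n {0, 2} ∪ wordsIn n {1, 3} with hU
  refine ⟨fun X hX => orbit_card hX, ?_, ?_⟩
  · -- counting orbits
    set T : Finset (Fin n → Fin 4) := Finset.univ.filter (· ∉ U) with hT
    set q : (Fin n → Fin 4) → Quotient (MulAction.orbitRel k80Group (Fin n → Fin 4)) :=
      Quotient.mk _ with hq
    set t : Finset (Quotient (MulAction.orbitRel k80Group (Fin n → Fin 4))) := T.image q with ht
    -- fibers over t have 8 elements
    have hfiber : ∀ b ∈ t, (T.filter (fun x => q x = b)).card = 8 := by
      intro b hb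
      obtain ⟨X, hXT, rfl⟩ := Finset.mem_image.1 hb
      have hXU : X ∉ U := (Finset.mem_filter.1 hXT).2
      have heq : T.filter (fun x => q x = q X) = (MulAction.orbit k80Group X).toFinset := by
        ext Y
        simp only [Finset.mem_filter, Set.mem_toFinset, hT, Finset.mem_univ, true_and]
        constructor
        · rintro ⟨-, hYX⟩
          exact (MulAction.orbitRel_apply (G := k80Group)).1 (Quotient.eq''.1 hYX)
        · intro hY
          obtain ⟨g, rfl⟩ := hY
          exact ⟨smul_notU hXU g, Quotient.sound ((MulAction.orbitRel_apply).2 ⟨g, rfl⟩)⟩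
      rw [heq, Set.toFinset_card, ← Nat.card_eq_fintype_card]
      exact orbit_card hXU
    have hsum : T.card = t.card * 8 := by
      rw [Finset.card_eq_sum_card_fiberwise (fun x hx => Finset.mem_image_of_mem q hx)]
      rw [Finset.sum_congr rfl hfiber, Finset.sum_const, smul_eq_mul]
    -- the subtype equals the coercion of t
    have hset : {o : Quotient (MulAction.orbitRel k80Group (Fin n → Fin 4)) //
        ∃ X : Fin n → Fin 4, X ∉ U ∧ q X = o} ≃ {o // o ∈ t} := by
      apply Equiv.subtypeEquiv (Equiv.refl _)
      intro o
      simp only [Equiv.refl_apply, ht, Finset.mem_image, hT, Finset.mem_filter,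
        Finset.mem_univ, true_and]
    have hcardsub : Nat.card {o : Quotient (MulAction.orbitRel k80Group (Fin n → Fin 4)) //
        ∃ X : Fin n → Fin 4, X ∉ U ∧ q X = o} = t.card := by
      rw [Nat.card_congr hset, Nat.card_eq_fintype_card, Fintype.card_coe]
    -- T.card = 4^n - 2^(n+1)
    have hTcard : T.card = 4 ^ n - 2 ^ (n + 1) := by
      have hUcard : U.ncard = 2 ^ (n + 1) := by
        have hdisj : Disjoint (wordsIn n {0, 2}) (wordsIn n {1, 3}) := by
          rw [Set.disjoint_left]
          intro X h02 h13
          have i : Fin n := ⟨0, by omega⟩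
          exact not13 _ (h02 i) (h13 i)
        rw [hU, Set.ncard_union_eq hdisj (Set.toFinite _) (Set.toFinite _),
          ← Nat.card_coe_set_eq, ← Nat.card_coe_set_eq,
          card_wordsIn _ (by rw [Nat.card_eq_fintype_card]; decide),
          card_wordsIn _ (by rw [Nat.card_eq_fintype_card]; decide)]
        ring
      have h4 : Nat.card (Fin n → Fin 4) = 4 ^ n := by
        rw [Nat.card_eq_fintype_card, Fintype.card_fun]
        simp
      have hcompl := Set.ncard_add_ncard_compl U (Set.toFinite _) (Set.toFinite _)
      have hTc : T.card = Uᶜ.ncard := by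
        rw [← Set.ncard_coe_finset]
        congr 1
        ext X
        simp [hT, Set.mem_compl_iff]
      omega
    have h8 : (0:ℕ) < 8 := by norm_num
    rw [hcardsub]
    omega
  · -- arithmetic
    obtain ⟨m, rfl⟩ : ∃ m, n = m + 2 := ⟨n - 2, by omega⟩
    have h1 : (4:ℕ) ^ (m + 2) = 2 ^ (2 * m + 4) := by
      rw [show (4:ℕ) = 2^2 by norm_num, ← pow_mul]
      ring_nf
    have h2 : 2 * (m + 2) - 3 = 2 * m + 1 := by omega
    have h3 : m + 2 - 2 = m := by omega
    rw [h1, h2, h3]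
    have hle : (2:ℕ) ^ m ≤ 2 ^ (2 * m + 1) := Nat.pow_le_pow_right (by norm_num) (by omega)
    have key : (2:ℕ) ^ (2 * m + 4) - 2 ^ (m + 2 + 1) = 8 * (2 ^ (2 * m + 1) - 2 ^ m) := by
      rw [Nat.mul_sub]
      congr 1 <;> ring
    rw [key, Nat.mul_div_cancel_left _ (by norm_num)]
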